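/- For every finitely additive complex set function μ : 𝔜 → ℂ, the total variation satisfies |μ|(Ω) = sup_{n≥1} S_n, where S_n := Σ_{p an n-node} |μ(Cyl(p))|. -/

import Mathlib

open MeasureTheory Filter Finset

attribute [local instance] Classical.propDecidable

noncomputable section

/-- A relation on ℕ representing a naturally labelled past-finite causal set:
a strict partial order `r` with `r i j → i < j`. -/
def CausalRel (r : ℕ → ℕ → Prop) : Prop :=
  (∀ i, ¬ r i i) ∧ (∀ i j k, r i j → r j k → r i k) ∧ (∀ i j, r i j → i < j)

/-- Ω, the sample space of naturally labelled past-finite causal sets. -/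
def Omega : Type := {r : ℕ → ℕ → Prop // CausalRel r}

/-- An `n`-node: a strict partial order on `Fin n` compatible with the labelling. -/
def IsNode {n : ℕ} (p : Fin n → Fin n → Prop) : Prop :=
  (∀ i, ¬ p i i) ∧ (∀ i j k, p i j → p j k → p i k) ∧
    (∀ i j : Fin n, p i j → (i : ℕ) < (j : ℕ))

/-- The cylinder set of an `n`-node. -/
def Cyl {n : ℕ} (p : Fin n → Fin n → Prop) : Set Omega :=
  {r | ∀ i j : Fin n, r.1 i.1 j.1 ↔ p i j}

/-- The Boolean set algebra 𝔜 generated by the cylinder sets (and Ω itself) under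
finite unions, intersections and complements. -/
inductive InAlg : Set Omega → Prop
  | basic {n : ℕ} (hn : 1 ≤ n) (p : Fin n → Fin n → Prop) (hp : IsNode p) : InAlg (Cyl p)
  | univ : InAlg Set.univ
  | compl (s : Set Omega) : InAlg s → InAlg sᶜ
  | union (s t : Set Omega) : InAlg s → InAlg t → InAlg (s ∪ t)

/-- Finite additivity of a complex set function on the algebra 𝔜. -/
def FinitelyAdditive (μ : Set Omega → ℂ) : Prop :=
  ∀ s t : Set Omega, InAlg s → InAlg t → Disjoint s t → μ (s ∪ t) = μ s + μ t

/-- A finite partition of Ω into pairwise disjoint members of 𝔜. -/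
def IsPartition (π : Finset (Set Omega)) : Prop :=
  (∀ s ∈ π, InAlg s) ∧ ((↑π : Set (Set Omega)).Pairwise Disjoint) ∧
    ⋃₀ (↑π : Set (Set Omega)) = Set.univ

/-- Bounded variation: the sums Σᵢ |μ(αᵢ)| over finite partitions of Ω into members
of 𝔜 are uniformly bounded. -/
def BoundedVariation (μ : Set Omega → ℂ) : Prop :=
  ∃ M : ℝ, ∀ π : Finset (Set Omega), IsPartition π → ∑ s ∈ π, ‖μ s‖ ≤ M

/-- λ(a,b) = Σ_{k=b}^{a} C(a−b, k−b)·t_k. -/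
def lam (t : ℕ → ℂ) (a b : ℕ) : ℂ :=
  ∑ k ∈ Finset.Icc b a, ((a - b).choose (k - b) : ℂ) * t k

/-- The maximal elements of a finite subset `I` with respect to the relation `c`. -/
def maxIn {n : ℕ} (c : Fin n → Fin n → Prop) (I : Finset (Fin n)) : Finset (Fin n) :=
  I.filter fun i => ∀ j ∈ I, ¬ c i j

/-- The past of the element `m` in the node `p`. -/
def pastOf {n : ℕ} (p : Fin n → Fin n → Prop) (m : Fin n) : Finset (Fin n) :=
  Finset.univ.filter fun i => p i m

/-- The ℂSG amplitude of (the cylinder set of) an `n`-node: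
∏_{m=1}^{n−1} λ(ϖ_m, μ_m)/λ(m,0). -/
def amp (t : ℕ → ℂ) {n : ℕ} (p : Fin n → Fin n → Prop) : ℂ :=
  ∏ m ∈ Finset.univ.filter (fun m : Fin n => 1 ≤ (m : ℕ)),
    lam t (pastOf p m).card (maxIn p (pastOf p m)).card / lam t (m : ℕ) 0

/-- μ is the ℂSG measure associated to the coupling constants t: it is finitely
additive on 𝔜 and takes the prescribed values on cylinder sets. -/
def IsCSG (t : ℕ → ℂ) (μ : Set Omega → ℂ) : Prop :=
  FinitelyAdditive μ ∧
    ∀ (n : ℕ), 1 ≤ n → ∀ p : Fin n → Fin n → Prop, IsNode p → μ (Cyl p) = amp t p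

/-- `I` is an order ideal (downward-closed set) of the relation `c`. -/
def isIdeal {n : ℕ} (c : Fin n → Fin n → Prop) (I : Finset (Fin n)) : Prop :=
  ∀ j ∈ I, ∀ i, c i j → i ∈ I

/-- Q(c) := Σ_{I an order ideal of c} |λ(|I|, m(I))|. -/
def Qval (t : ℕ → ℂ) {n : ℕ} (c : Fin n → Fin n → Prop) : ℝ :=
  ∑ I ∈ Finset.univ.filter (fun I : Finset (Fin n) => isIdeal c I),
    ‖lam t I.card (maxIn c I).card‖

/-- ζ(c) := Q(c)/|λ(n,0)| − 1. -/
def zeta (t : ℕ → ℂ) {n : ℕ} (c : Fin n → Fin n → Prop) : ℝ :=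
  Qval t c / ‖lam t n 0‖ - 1

/-- ζ_n^a := (Σ_{k=0}^{n} C(n,k)·|t_k|)/|λ(n,0)| − 1. -/
def zetaA (t : ℕ → ℂ) (n : ℕ) : ℝ :=
  (∑ k ∈ Finset.range (n + 1), (n.choose k : ℝ) * ‖t k‖) /
    ‖lam t n 0‖ - 1

/-- ζ_n^c := (|t_0| + Σ_{ϖ=1}^{n} |λ(ϖ,1)|)/|λ(n,0)| − 1. -/
def zetaC (t : ℕ → ℂ) (n : ℕ) : ℝ :=
  (‖t 0‖ + ∑ w ∈ Finset.Icc 1 n, ‖lam t w 1‖) /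
    ‖lam t n 0‖ - 1

/-- S_n := Σ_{p an n-node} |μ(Cyl(p))|. -/
def Svar (μ : Set Omega → ℂ) (n : ℕ) : ℝ :=
  ∑ p : {p : Fin n → Fin n → Prop // IsNode p}, ‖μ (Cyl p.1)‖

/-- A set depends only on the restriction to `Fin n`. -/
def LevelSet (n : ℕ) (s : Set Omega) : Prop :=
  ∀ r r' : Omega, (∀ i j : Fin n, r.1 i.1 j.1 ↔ r'.1 i.1 j.1) → r ∈ s → r' ∈ s

lemma levelSet_mono {m n : ℕ} (h : m ≤ n) {s : Set Omega} (hs : LevelSet m s) :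
    LevelSet n s := fun r r' hag hr =>
  hs r r' (fun i j => hag (Fin.castLE h i) (Fin.castLE h j)) hr

/-- Restriction of a causal relation to `Fin n`. -/
def restrictN (n : ℕ) (r : Omega) : Fin n → Fin n → Prop := fun i j => r.1 i.1 j.1

lemma isNode_restrictN (n : ℕ) (r : Omega) : IsNode (restrictN n r) :=
  ⟨fun i => r.2.1 i.1, fun _ _ _ h1 h2 => r.2.2.1 _ _ _ h1 h2,
    fun _ _ h => r.2.2.2 _ _ h⟩

lemma mem_cyl_iff {n : ℕ} (p : Fin n → Fin n → Prop) (r : Omega) :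
    r ∈ Cyl p ↔ restrictN n r = p := by
  constructor
  · intro h
    funext i j
    exact propext (h i j)
  · intro h i j
    rw [← h]
    exact Iff.rfl

/-- Extension of a node to a relation on ℕ. -/
def extRel {n : ℕ} (p : Fin n → Fin n → Prop) : ℕ → ℕ → Prop :=
  fun i j => ∃ hi : i < n, ∃ hj : j < n, p ⟨i, hi⟩ ⟨j, hj⟩

lemma cyl_nonempty {n : ℕ} (p : Fin n → Fin n → Prop) (hp : IsNode p) :
    (Cyl p).Nonempty := by
  refine ⟨⟨extRel p, ?_, ?_, ?_⟩, ?_⟩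
  · rintro i ⟨hi, _, h⟩
    exact hp.1 _ h
  · rintro i j k ⟨hi, hj, h1⟩ ⟨hj', hk, h2⟩
    exact ⟨hi, hk, hp.2.1 _ _ _ h1 h2⟩
  · rintro i j ⟨hi, hj, h⟩
    exact hp.2.2 _ _ h
  · intro i j
    constructor
    · rintro ⟨hi, hj, h⟩
      simpa using h
    · intro h
      exact ⟨i.2, j.2, by simpa using h⟩

lemma cyl_eq_of_mem {n : ℕ} {p q : Fin n → Fin n → Prop} {r : Omega}
    (hp : r ∈ Cyl p) (hq : r ∈ Cyl q) : p = q := by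
  rw [mem_cyl_iff] at hp hq
  rw [← hp, ← hq]

lemma cyl_disjoint {n : ℕ} {p q : Fin n → Fin n → Prop} (h : p ≠ q) :
    Disjoint (Cyl p) (Cyl q) := by
  rw [Set.disjoint_left]
  intro r hp hq
  exact h (cyl_eq_of_mem hp hq)

lemma inAlg_level {s : Set Omega} (hs : InAlg s) : ∃ n, 1 ≤ n ∧ LevelSet n s := by
  induction hs with
  | @basic n hn p hp =>
      exact ⟨n, hn, fun r r' hag hr i j => ((hag i j).symm).trans (hr i j)⟩
  | univ => exact ⟨1, le_refl 1, fun _ _ _ _ => Set.mem_univ _⟩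
  | compl s _ ih =>
      obtain ⟨n, hn, h⟩ := ih
      exact ⟨n, hn, fun r r' hag hr hr' => hr (h r' r (fun i j => (hag i j).symm) hr')⟩
  | union s t _ _ ihs iht =>
      obtain ⟨n, hn, hns⟩ := ihs
      obtain ⟨m, hm, hmt⟩ := iht
      refine ⟨max n m, le_trans hn (le_max_left _ _), fun r r' hag hr => ?_⟩
      rcases hr with hr | hr
      · exact Or.inl (levelSet_mono (le_max_left n m) hns r r' hag hr)
      · exact Or.inr (levelSet_mono (le_max_right n m) hmt r r' hag hr)

lemma inAlg_empty : InAlg (∅ : Set Omega) := by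
  have h := InAlg.compl _ InAlg.univ
  simpa using h

lemma inAlg_biUnion {ι : Type*} (A : Finset ι) (f : ι → Set Omega)
    (h : ∀ i ∈ A, InAlg (f i)) : InAlg (⋃ i ∈ A, f i) := by
  classical
  induction A using Finset.induction with
  | empty => simpa using inAlg_empty
  | @insert a A ha ih =>
      rw [Finset.set_biUnion_insert]
      exact InAlg.union _ _ (h a (Finset.mem_insert_self a A))
        (ih fun i hi => h i (Finset.mem_insert_of_mem hi))

lemma mu_empty {μ : Set Omega → ℂ} (hμ : FinitelyAdditive μ) : μ ∅ = 0 := by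
  have h := hμ ∅ ∅ inAlg_empty inAlg_empty disjoint_bot_left
  rw [Set.union_self] at h
  have : μ ∅ + 0 = μ ∅ + μ ∅ := by rw [add_zero]; exact h
  exact (add_right_inj _).mp this |>.symm

lemma mu_sum {μ : Set Omega → ℂ} (hμ : FinitelyAdditive μ) {ι : Type*}
    (A : Finset ι) (f : ι → Set Omega) (hf : ∀ i ∈ A, InAlg (f i))
    (hd : ∀ i ∈ A, ∀ j ∈ A, i ≠ j → Disjoint (f i) (f j)) :
    μ (⋃ i ∈ A, f i) = ∑ i ∈ A, μ (f i) := by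
  classical
  induction A using Finset.induction with
  | empty => simpa using mu_empty hμ
  | @insert a A ha ih =>
      rw [Finset.set_biUnion_insert, Finset.sum_insert ha]
      have hdisj : Disjoint (f a) (⋃ i ∈ A, f i) := by
        simp only [Set.disjoint_iUnion_right]
        intro i hi
        exact hd a (Finset.mem_insert_self a A) i (Finset.mem_insert_of_mem hi)
          (fun h => ha (h ▸ hi))
      rw [hμ _ _ (hf a (Finset.mem_insert_self a A))
        (inAlg_biUnion A f fun i hi => hf i (Finset.mem_insert_of_mem hi)) hdisj,
        ih (fun i hi => hf i (Finset.mem_insert_of_mem hi))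
          (fun i hi j hj => hd i (Finset.mem_insert_of_mem hi) j
            (Finset.mem_insert_of_mem hj))]

/-- The `n`-node cylinders contained in `s`. -/
def nodeCyls (n : ℕ) (s : Set Omega) : Finset {p : Fin n → Fin n → Prop // IsNode p} :=
  Finset.univ.filter fun p => Cyl p.1 ⊆ s

lemma eq_biUnion_nodeCyls {n : ℕ} {s : Set Omega} (hs : LevelSet n s) :
    s = ⋃ p ∈ nodeCyls n s, Cyl p.1 := by
  ext r
  constructor
  · intro hr
    have hmem : r ∈ Cyl (restrictN n r) := (mem_cyl_iff _ r).mpr rfl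
    have hsub : Cyl (restrictN n r) ⊆ s := by
      intro r' hr'
      rw [mem_cyl_iff] at hr'
      refine hs r r' (fun i j => ?_) hr
      have := congrFun (congrFun hr' i) j
      exact Iff.symm (iff_of_eq this)
    exact Set.mem_biUnion
      (Finset.mem_filter.mpr ⟨Finset.mem_univ
        (⟨restrictN n r, isNode_restrictN n r⟩ :
          {p : Fin n → Fin n → Prop // IsNode p}), hsub⟩) hmem
  · intro hr
    obtain ⟨p, hp, hrp⟩ := Set.mem_iUnion₂.mp hr
    exact (Finset.mem_filter.mp hp).2 hrp

lemma mu_eq_sum_nodeCyls {μ : Set Omega → ℂ} (hμ : FinitelyAdditive μ) {n : ℕ}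
    (hn : 1 ≤ n) {s : Set Omega} (hs : LevelSet n s) :
    μ s = ∑ p ∈ nodeCyls n s, μ (Cyl p.1) := by
  conv_lhs => rw [eq_biUnion_nodeCyls hs]
  exact mu_sum hμ _ _ (fun p _ => InAlg.basic hn p.1 p.2)
    (fun p _ q _ hpq => cyl_disjoint (fun h => hpq (Subtype.ext h)))

lemma cyl_injective {n : ℕ} :
    Function.Injective (fun p : {p : Fin n → Fin n → Prop // IsNode p} => Cyl p.1) := by
  intro p q h
  obtain ⟨r, hr⟩ := cyl_nonempty p.1 p.2
  have h' : Cyl p.1 = Cyl q.1 := h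
  have hq : r ∈ Cyl q.1 := h' ▸ hr
  exact Subtype.ext (cyl_eq_of_mem hr hq)

/-- |μ|(Ω) = sup_{n ≥ 1} S_n, where S_n = Σ_{p an n-node} |μ(Cyl(p))|
(an equality in [0,∞], since the total variation may be infinite). -/
theorem statement_3 (μ : Set Omega → ℂ) (hμ : FinitelyAdditive μ) :
    (⨆ π : {π : Finset (Set Omega) // IsPartition π},
        ENNReal.ofReal (∑ s ∈ π.1, ‖μ s‖)) =
      ⨆ n : ℕ, ⨆ _ : 1 ≤ n, ENNReal.ofReal (Svar μ n) := by
  classical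
  apply le_antisymm
  · -- every partition sum is bounded by some S_n
    apply iSup_le
    rintro ⟨π, hπ⟩
    -- choose a common level n
    set g : Set Omega → ℕ := fun s =>
      if h : InAlg s then (inAlg_level h).choose else 0 with hg
    set n : ℕ := (π.sup g) ⊔ 1 with hn
    have hn1 : 1 ≤ n := le_sup_right
    have hlev : ∀ s ∈ π, LevelSet n s := by
      intro s hs
      have halg : InAlg s := hπ.1 s hs
      have h1 : LevelSet (g s) s := by
        rw [hg]; simp only [dif_pos halg]
        exact (inAlg_level halg).choose_spec.2
      exact levelSet_mono (le_trans (Finset.le_sup hs) le_sup_left) h1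
    -- the real inequality
    have key : ∑ s ∈ π, ‖μ s‖ ≤ Svar μ n := by
      have h1 : ∀ s ∈ π, ‖μ s‖ ≤
          ∑ p ∈ nodeCyls n s, ‖μ (Cyl p.1)‖ := by
        intro s hs
        rw [mu_eq_sum_nodeCyls hμ hn1 (hlev s hs)]
        exact norm_sum_le _ _
      refine le_trans (Finset.sum_le_sum h1) ?_
      have hdisj : (↑π : Set (Set Omega)).PairwiseDisjoint (nodeCyls n) := by
        intro s hs t ht hst
        simp only [Function.onFun]
        rw [Finset.disjoint_left]
        intro p hps hpt
        have h1 : Cyl p.1 ⊆ s := (Finset.mem_filter.mp hps).2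
        have h2 : Cyl p.1 ⊆ t := (Finset.mem_filter.mp hpt).2
        obtain ⟨r, hr⟩ := cyl_nonempty p.1 p.2
        exact (hπ.2.1 hs ht hst).le_bot ⟨h1 hr, h2 hr⟩
      rw [← Finset.sum_biUnion hdisj]
      refine le_trans (Finset.sum_le_sum_of_subset_of_nonneg
        (Finset.subset_univ _) (fun _ _ _ => norm_nonneg _)) ?_
      exact le_of_eq (by rw [Svar, ← Finset.sum_coe_sort])
    calc ENNReal.ofReal (∑ s ∈ π, ‖μ s‖)
        ≤ ENNReal.ofReal (Svar μ n) := ENNReal.ofReal_le_ofReal key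
      _ ≤ _ := le_iSup_of_le n
          (le_iSup (fun _ : 1 ≤ n => ENNReal.ofReal (Svar μ n)) hn1)
  · -- each S_n is a partition sum
    apply iSup_le
    intro n
    apply iSup_le
    intro hn
    set πn : Finset (Set Omega) :=
      Finset.image (fun p : {p : Fin n → Fin n → Prop // IsNode p} => Cyl p.1)
        Finset.univ with hπn
    have hpart : IsPartition πn := by
      refine ⟨?_, ?_, ?_⟩
      · intro s hs
        obtain ⟨p, _, rfl⟩ := Finset.mem_image.mp hs
        exact InAlg.basic hn p.1 p.2
      · intro s hs t ht hst
        simp only [hπn, Finset.coe_image, Set.mem_image] at hs ht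
        obtain ⟨p, _, rfl⟩ := hs
        obtain ⟨q, _, rfl⟩ := ht
        exact cyl_disjoint fun h => hst (by rw [h])
      · ext r
        simp only [Set.mem_univ, iff_true, Set.mem_sUnion]
        refine ⟨Cyl (restrictN n r), ?_, (mem_cyl_iff _ r).mpr rfl⟩
        simp only [hπn, Finset.coe_image, Set.mem_image]
        exact ⟨⟨restrictN n r, isNode_restrictN n r⟩,
          Finset.mem_coe.mpr (Finset.mem_univ _), rfl⟩
    have hsum : ∑ s ∈ πn, ‖μ s‖ = Svar μ n := by
      rw [hπn, Finset.sum_image (fun p _ q _ h => cyl_injective h)]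
      rfl
    exact le_iSup_of_le ⟨πn, hpart⟩ (le_of_eq (by rw [hsum]))

end
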